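/- Let j ∈ ℕ, p ∈ {0, 1}, set N = 2j + p, let γ ∈ ℝ, and let n be a natural number with 0 ≤ n ≤ N. For t ∈ ℝ define Bₙ(t) = ½ (p − 1)(−2j − p + 2t − 1)(γ + p − 1) / ((2n − 2j − p + 2t − 1)(2n − 2j − p + 2t + 1)) + ½ (N + γ − 1). Then Bₙ(t) converges, as t → 0 with t ≠ 0, to −(N − n)(N − 2n − 2 + p + γ) / (2 (2n − N − p + 1)) − n (N − 2n + 2 − p − γ) / (2 (2n − N + p − 1)). -/

import Mathlib

open Filter Topology

/-- The para-Krawtchouk limit of the diagonal coefficient `bₙ`: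
as `t → 0` (with `t ≠ 0`), `Bₙ(t)` tends to the diagonal recurrence
coefficient of the monic para-Krawtchouk polynomials, where `N = 2j + p`. -/
theorem stmt_18 (j p : ℕ) (hp : p = 0 ∨ p = 1) (N : ℕ) (hN : N = 2 * j + p)
    (γ : ℝ) (n : ℕ) (hnN : n ≤ N) :
    Tendsto (fun t : ℝ =>
        (1 / 2) * ((p : ℝ) - 1) * (-2 * (j : ℝ) - p + 2 * t - 1) * (γ + p - 1) /
          ((2 * (n : ℝ) - 2 * j - p + 2 * t - 1) *
            (2 * (n : ℝ) - 2 * j - p + 2 * t + 1)) +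
        (1 / 2) * ((N : ℝ) + γ - 1))
      (𝓝[≠] 0)
      (𝓝 (-(((N : ℝ) - n) * ((N : ℝ) - 2 * n - 2 + p + γ)) /
          (2 * (2 * (n : ℝ) - N - p + 1)) -
        (n : ℝ) * ((N : ℝ) - 2 * n + 2 - p - γ) /
          (2 * (2 * (n : ℝ) - N + p - 1)))) := by
  rcases hp with hp | hp
  · -- p = 0
    subst hp hN
    have h1 : (2 * (n : ℝ) - 2 * j - 1) ≠ 0 := by
      have hz : (2 * (n : ℤ) - 2 * j - 1) ≠ 0 := by omega
      intro h; apply hz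
      exact_mod_cast (by push_cast; linarith : ((2 * (n : ℤ) - 2 * j - 1 : ℤ) : ℝ) = 0)
    have h2 : (2 * (n : ℝ) - 2 * j + 1) ≠ 0 := by
      have hz : (2 * (n : ℤ) - 2 * j + 1) ≠ 0 := by omega
      intro h; apply hz
      exact_mod_cast (by push_cast; linarith : ((2 * (n : ℤ) - 2 * j + 1 : ℤ) : ℝ) = 0)
    have hc : ContinuousAt (fun t : ℝ =>
        (1 / 2) * ((0 : ℕ) - 1 : ℝ) * (-2 * (j : ℝ) - (0:ℕ) + 2 * t - 1) * (γ + (0:ℕ) - 1) /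
          ((2 * (n : ℝ) - 2 * j - (0:ℕ) + 2 * t - 1) *
            (2 * (n : ℝ) - 2 * j - (0:ℕ) + 2 * t + 1)) +
        (1 / 2) * (((2 * j + 0 : ℕ) : ℝ) + γ - 1)) 0 := by
      apply ContinuousAt.add _ continuousAt_const
      apply ContinuousAt.div
      · fun_prop
      · fun_prop
      · simp only [Nat.cast_zero]
        have e1 : 2 * (n : ℝ) - 2 * j - 0 + 2 * 0 - 1 = 2 * n - 2 * j - 1 := by ring
        have e2 : 2 * (n : ℝ) - 2 * j - 0 + 2 * 0 + 1 = 2 * n - 2 * j + 1 := by ring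
        rw [e1, e2]
        exact mul_ne_zero h1 h2
    have := hc.tendsto.mono_left (nhdsWithin_le_nhds (s := {(0:ℝ)}ᶜ))
    convert this using 2
    simp only [Nat.cast_zero, Nat.cast_add, Nat.cast_mul, Nat.cast_ofNat]
    have h3 : (2 * (n : ℝ) - (2 * j) - 0 + 1) ≠ 0 := by
      have h : 2 * (n : ℝ) - (2 * j) - 0 + 1 = 2 * n - 2 * j + 1 := by ring
      rw [h]; exact h2
    have h4 : (2 * (n : ℝ) - (2 * j) + 0 - 1) ≠ 0 := by
      have h : 2 * (n : ℝ) - (2 * j) + 0 - 1 = 2 * n - 2 * j - 1 := by ring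
      rw [h]; exact h1
    simp only [add_zero, sub_zero, mul_zero] at h3 h4 ⊢
    have h5 : 2 * ((n : ℝ) - j) + 1 ≠ 0 := by rw [mul_sub]; exact h3
    have h6 : 2 * ((n : ℝ) - j) - 1 ≠ 0 := by rw [mul_sub]; exact h4
    field_simp
    ring
  · -- p = 1
    subst hp hN
    have key : ∀ t : ℝ,
        (1 / 2) * ((1:ℕ) - 1 : ℝ) * (-2 * (j : ℝ) - (1:ℕ) + 2 * t - 1) * (γ + (1:ℕ) - 1) /
          ((2 * (n : ℝ) - 2 * j - (1:ℕ) + 2 * t - 1) *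
            (2 * (n : ℝ) - 2 * j - (1:ℕ) + 2 * t + 1)) +
        (1 / 2) * (((2 * j + 1 : ℕ) : ℝ) + γ - 1)
        = (1 / 2) * (((2 * j + 1 : ℕ) : ℝ) + γ - 1) := by
      intro t
      simp
    have heq : (fun t : ℝ =>
        (1 / 2) * ((1:ℕ) - 1 : ℝ) * (-2 * (j : ℝ) - (1:ℕ) + 2 * t - 1) * (γ + (1:ℕ) - 1) /
          ((2 * (n : ℝ) - 2 * j - (1:ℕ) + 2 * t - 1) *
            (2 * (n : ℝ) - 2 * j - (1:ℕ) + 2 * t + 1)) +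
        (1 / 2) * (((2 * j + 1 : ℕ) : ℝ) + γ - 1))
        = fun _ : ℝ => (1 / 2) * (((2 * j + 1 : ℕ) : ℝ) + γ - 1) := funext key
    rw [heq]
    have hval : (-((((2 * j + 1 : ℕ) : ℝ) - n) * (((2 * j + 1 : ℕ) : ℝ) - 2 * n - 2 + (1:ℕ) + γ)) /
          (2 * (2 * (n : ℝ) - ((2 * j + 1 : ℕ) : ℝ) - (1:ℕ) + 1)) -
        (n : ℝ) * (((2 * j + 1 : ℕ) : ℝ) - 2 * n + 2 - (1:ℕ) - γ) /
          (2 * (2 * (n : ℝ) - ((2 * j + 1 : ℕ) : ℝ) + (1:ℕ) - 1)))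
        = (1 / 2) * (((2 * j + 1 : ℕ) : ℝ) + γ - 1) := by
      have hne : (2 * (n : ℝ) - ((2 * j + 1 : ℕ) : ℝ)) ≠ 0 := by
        have : (2 * (n : ℤ) - (2 * j + 1)) ≠ 0 := by omega
        intro h; apply this
        have : ((2 * (n : ℤ) - (2 * j + 1) : ℤ) : ℝ) = 0 := by push_cast at h ⊢; linarith
        exact_mod_cast this
      have h3 : (2 * (2 * (n : ℝ) - ((2 * j + 1 : ℕ) : ℝ) - (1:ℕ) + 1)) ≠ 0 := by
        have e : (2 * (2 * (n : ℝ) - ((2 * j + 1 : ℕ) : ℝ) - (1:ℕ) + 1)) =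
            2 * (2 * (n : ℝ) - ((2 * j + 1 : ℕ) : ℝ)) := by push_cast; ring
        rw [e]; exact mul_ne_zero two_ne_zero hne
      have h4 : (2 * (2 * (n : ℝ) - ((2 * j + 1 : ℕ) : ℝ) + (1:ℕ) - 1)) ≠ 0 := by
        have e : (2 * (2 * (n : ℝ) - ((2 * j + 1 : ℕ) : ℝ) + (1:ℕ) - 1)) =
            2 * (2 * (n : ℝ) - ((2 * j + 1 : ℕ) : ℝ)) := by push_cast; ring
        rw [e]; exact mul_ne_zero two_ne_zero hne
      rw [show (2 * (2 * (n : ℝ) - ((2 * j + 1 : ℕ) : ℝ) - (1:ℕ) + 1)) =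
            2 * (2 * (n : ℝ) - ((2 * j + 1 : ℕ) : ℝ)) by push_cast; ring,
         show (2 * (2 * (n : ℝ) - ((2 * j + 1 : ℕ) : ℝ) + (1:ℕ) - 1)) =
            2 * (2 * (n : ℝ) - ((2 * j + 1 : ℕ) : ℝ)) by push_cast; ring]
      have h2 : (2 : ℝ) * (2 * (n : ℝ) - ((2 * j + 1 : ℕ) : ℝ)) ≠ 0 :=
        mul_ne_zero two_ne_zero hne
      rw [div_sub_div_same, div_eq_iff h2]
      push_cast
      ring
    rw [hval]
    exact tendsto_const_nhds
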